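/- Let A ∈ ℝ^{m×n} be nonzero, let P ⊆ ℝ^m and Q ⊆ ℝ^n be polyhedral cones, and let (u,v) be a critical pair of SV(A,P,Q). Let F_u and F_v be the faces of P and Q of least dimension containing u and v respectively, and let r be the multiplicity of ‖A‖ as a singular value of A. If dim(F_u) + dim(F_v) > m + n − r and ⟨u,Av⟩ ≠ ‖A‖ and ⟨u,Av⟩ ≠ −‖A‖, then (u,v) is a saddle point of SV(A,P,Q), i.e. it is neither a local minimizer nor a local maximizer of (u,v) ↦ ⟨u,Av⟩ on the feasible set {(u,v) : u ∈ P, v ∈ Q, ‖u‖ = ‖v‖ = 1}. -/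

import Mathlib

open Matrix

/-- Euclidean norm of a vector in `ℝ^n`. -/
noncomputable def vnorm {n : ℕ} (v : Fin n → ℝ) : ℝ := Real.sqrt (v ⬝ᵥ v)

/-- Spectral norm of a real matrix: the largest value of `‖Av‖` over the unit ball. -/
noncomputable def specNorm {m n : ℕ} (A : Matrix (Fin m) (Fin n) ℝ) : ℝ :=
  sSup {r : ℝ | ∃ v : Fin n → ℝ, vnorm v ≤ 1 ∧ r = vnorm (A.mulVec v)}

/-- The polyhedral cone generated by the columns of `G`. -/
def coneOf {m p : ℕ} (G : Matrix (Fin m) (Fin p) ℝ) : Set (Fin m → ℝ) :=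
  {u | ∃ x : Fin p → ℝ, (∀ i, 0 ≤ x i) ∧ u = G.mulVec x}

/-- `F` is a face of the cone `P`. -/
def IsFace {d : ℕ} (P F : Set (Fin d → ℝ)) : Prop :=
  F ⊆ P ∧ Convex ℝ F ∧ (∀ c : ℝ, 0 ≤ c → ∀ x ∈ F, c • x ∈ F) ∧
    ∀ v₁ v₂, v₁ ∈ P → v₂ ∈ P → v₁ + v₂ ∈ F → v₁ ∈ F ∧ v₂ ∈ F

/-- The dimension of a face: the dimension of its linear span. -/
noncomputable def faceDim {d : ℕ} (F : Set (Fin d → ℝ)) : ℕ :=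
  Module.finrank ℝ ↥(Submodule.span ℝ F)

namespace SV8

lemma dot_self_nonneg {n : ℕ} (x : Fin n → ℝ) : 0 ≤ x ⬝ᵥ x :=
  Finset.sum_nonneg fun i _ => mul_self_nonneg _

lemma vnorm_nonneg {n : ℕ} (x : Fin n → ℝ) : 0 ≤ vnorm x := Real.sqrt_nonneg _

lemma vnorm_sq {n : ℕ} (x : Fin n → ℝ) : vnorm x ^ 2 = x ⬝ᵥ x :=
  Real.sq_sqrt (dot_self_nonneg x)

lemma dot_self_of_vnorm_one {n : ℕ} {x : Fin n → ℝ} (h : vnorm x = 1) : x ⬝ᵥ x = 1 := by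
  rw [← vnorm_sq, h]; norm_num

lemma vnorm_eq_sqrt {n : ℕ} {x : Fin n → ℝ} {c : ℝ} (h : x ⬝ᵥ x = c) :
    vnorm x = Real.sqrt c := by rw [vnorm, h]

lemma dot_eq_zero_self {n : ℕ} {x : Fin n → ℝ} (h : x ⬝ᵥ x = 0) : x = 0 := by
  funext i
  have := (Finset.sum_eq_zero_iff_of_nonneg (fun i _ => mul_self_nonneg (x i))).1 h i
    (Finset.mem_univ i)
  have := mul_self_eq_zero.1 this
  simpa using this

lemma cauchy {n : ℕ} (x y : Fin n → ℝ) : (x ⬝ᵥ y) ^ 2 ≤ (x ⬝ᵥ x) * (y ⬝ᵥ y) := by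
  have := Finset.sum_mul_sq_le_sq_mul_sq Finset.univ x y
  simpa [dotProduct, sq] using this

lemma abs_dot_le_one {n : ℕ} {x y : Fin n → ℝ} (hx : x ⬝ᵥ x = 1) (hy : y ⬝ᵥ y = 1) :
    |x ⬝ᵥ y| ≤ 1 := by
  have h := cauchy x y
  rw [hx, hy] at h
  nlinarith [abs_nonneg (x ⬝ᵥ y), sq_abs (x ⬝ᵥ y)]

lemma vnorm_smul {n : ℕ} {c : ℝ} (hc : 0 ≤ c) (x : Fin n → ℝ) :
    vnorm (c • x) = c * vnorm x := by
  have : (c • x) ⬝ᵥ (c • x) = c ^ 2 * (x ⬝ᵥ x) := by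
    simp [smul_dotProduct, dotProduct_smul, smul_eq_mul]; ring
  rw [vnorm, this, vnorm, Real.sqrt_mul (by positivity), Real.sqrt_sq hc]


structure IsCone {d : ℕ} (P : Set (Fin d → ℝ)) : Prop where
  add : ∀ x ∈ P, ∀ y ∈ P, x + y ∈ P
  smul : ∀ c : ℝ, 0 ≤ c → ∀ x ∈ P, c • x ∈ P
  zero : (0 : Fin d → ℝ) ∈ P

variable {d : ℕ} {P : Set (Fin d → ℝ)} {u : Fin d → ℝ}

lemma down (hC : IsCone P) (hu : u ∈ P) {x : Fin d → ℝ} {t t' : ℝ} (ht : 0 < t)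
    (hx : u - t • x ∈ P) (h1 : 0 ≤ t') (h2 : t' ≤ t) : u - t' • x ∈ P := by
  have key : u - t' • x = (1 - t'/t) • u + (t'/t) • (u - t • x) := by
    rw [smul_sub, smul_smul, div_mul_cancel₀ _ (ne_of_gt ht), sub_smul, one_smul]
    abel
  rw [key]
  exact hC.add _ (hC.smul _ (by rw [sub_nonneg]; exact div_le_one_of_le₀ h2 ht.le) _ hu)
    _ (hC.smul _ (by positivity) _ hx)

def Smin (P : Set (Fin d → ℝ)) (u : Fin d → ℝ) : Set (Fin d → ℝ) :=
  {x | x ∈ P ∧ ∃ t : ℝ, 0 < t ∧ u - t • x ∈ P}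

lemma Smin_subset : Smin P u ⊆ P := fun _ h => h.1

lemma Smin_add (hC : IsCone P) (hu : u ∈ P) :
    ∀ x ∈ Smin P u, ∀ y ∈ Smin P u, x + y ∈ Smin P u := by
  rintro x ⟨hxP, t1, ht1, hx⟩ y ⟨hyP, t2, ht2, hy⟩
  set t := min t1 t2 with htdef
  have ht : 0 < t := lt_min ht1 ht2
  have h1 : u - t • x ∈ P := down hC hu ht1 hx ht.le (min_le_left _ _)
  have h2 : u - t • y ∈ P := down hC hu ht2 hy ht.le (min_le_right _ _)
  refine ⟨hC.add _ hxP _ hyP, t / 2, by positivity, ?_⟩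
  have key : u - (t/2) • (x + y) = (1/2 : ℝ) • (u - t • x) + (1/2 : ℝ) • (u - t • y) := by
    rw [smul_add]
    rw [smul_sub, smul_sub, smul_smul, smul_smul]
    rw [← add_sub_assoc]
    norm_num
    module
  rw [key]
  exact hC.add _ (hC.smul _ (by norm_num) _ h1) _ (hC.smul _ (by norm_num) _ h2)

lemma Smin_smul (hC : IsCone P) (hu : u ∈ P) :
    ∀ c : ℝ, 0 ≤ c → ∀ x ∈ Smin P u, c • x ∈ Smin P u := by
  rintro c hc x ⟨hxP, t, ht, hx⟩
  rcases eq_or_lt_of_le hc with rfl | hc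
  · exact ⟨by simpa using hC.zero, 1, one_pos, by simpa using hu⟩
  · refine ⟨hC.smul _ hc.le _ hxP, t / c, by positivity, ?_⟩
    rwa [smul_smul, div_mul_cancel₀ _ (ne_of_gt hc)]

lemma Smin_mem (hC : IsCone P) (hu : u ∈ P) : u ∈ Smin P u := by
  refine ⟨hu, 1/2, by norm_num, ?_⟩
  have : u - (1/2 : ℝ) • u = (1/2 : ℝ) • u := by module
  rw [this]; exact hC.smul _ (by norm_num) _ hu

lemma Smin_isFace (hC : IsCone P) (hu : u ∈ P) : IsFace P (Smin P u) := by
  refine ⟨Smin_subset, ?_, Smin_smul hC hu, ?_⟩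
  · intro x hx y hy a b ha hb hab
    exact Smin_add hC hu _ (Smin_smul hC hu a ha x hx) _ (Smin_smul hC hu b hb y hy)
  · rintro x y hxP hyP ⟨_, t, ht, hxy⟩
    constructor
    · refine ⟨hxP, t, ht, ?_⟩
      have : u - t • x = (u - t • (x + y)) + t • y := by rw [smul_add]; abel
      rw [this]; exact hC.add _ hxy _ (hC.smul _ ht.le _ hyP)
    · refine ⟨hyP, t, ht, ?_⟩
      have : u - t • y = (u - t • (x + y)) + t • x := by rw [smul_add]; abel
      rw [this]; exact hC.add _ hxy _ (hC.smul _ ht.le _ hxP)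


lemma Smin_subset_face (hC : IsCone P) {F : Set (Fin d → ℝ)} (hF : IsFace P F) (huF : u ∈ F) :
    Smin P u ⊆ F := by
  rintro x ⟨hxP, t, ht, hx⟩
  have h1 : (u - t • x) + t • x ∈ F := by simpa using huF
  have h2 : t • x ∈ F := (hF.2.2.2 _ _ hx (hC.smul t ht.le x hxP) h1).2
  have h3 : t⁻¹ • (t • x) ∈ F := hF.2.2.1 t⁻¹ (by positivity) _ h2
  rwa [smul_smul, inv_mul_cancel₀ (ne_of_gt ht), one_smul] at h3

/-- The difference set of a convex cone, as a submodule. -/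
def diffSub (hC : IsCone P) (hu : u ∈ P) : Submodule ℝ (Fin d → ℝ) where
  carrier := {w | ∃ a ∈ Smin P u, ∃ b ∈ Smin P u, w = a - b}
  add_mem' := by
    rintro x y ⟨a, ha, b, hb, rfl⟩ ⟨c, hc, e, he, rfl⟩
    exact ⟨a + c, Smin_add hC hu _ ha _ hc, b + e, Smin_add hC hu _ hb _ he, by abel⟩
  zero_mem' := by
    have h0 : (0 : Fin d → ℝ) ∈ Smin P u :=
      ⟨hC.zero, 1, one_pos, by simpa using hu⟩
    exact ⟨0, h0, 0, h0, by simp⟩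
  smul_mem' := by
    rintro c x ⟨a, ha, b, hb, rfl⟩
    rcases le_or_gt 0 c with hc | hc
    · exact ⟨c • a, Smin_smul hC hu c hc _ ha, c • b, Smin_smul hC hu c hc _ hb,
        by rw [smul_sub]⟩
    · refine ⟨(-c) • b, Smin_smul hC hu _ (by linarith) _ hb,
        (-c) • a, Smin_smul hC hu _ (by linarith) _ ha, ?_⟩
      rw [smul_sub]; module

lemma span_le_diffSub (hC : IsCone P) (hu : u ∈ P) :
    Submodule.span ℝ (Smin P u) ≤ diffSub hC hu := by
  rw [Submodule.span_le]
  rintro x hx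
  exact ⟨x, hx, 0, ⟨hC.zero, 1, one_pos, by simpa using hu⟩, by simp⟩

/-- Key perturbation lemma: if `w` is in the span of the minimal face containing `u`,
then `u + t • w ∈ P` for all small positive `t`. -/
lemma perturb (hC : IsCone P) (hu : u ∈ P) {F : Set (Fin d → ℝ)}
    (hF : IsFace P F) (huF : u ∈ F)
    (hFmin : ∀ F', IsFace P F' → u ∈ F' → faceDim F ≤ faceDim F')
    {w : Fin d → ℝ} (hw : w ∈ Submodule.span ℝ F) :
    ∃ t₀ : ℝ, 0 < t₀ ∧ ∀ t : ℝ, 0 ≤ t → t ≤ t₀ → u + t • w ∈ P := by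
  -- spans of F and Smin coincide
  have hsub : Smin P u ⊆ F := Smin_subset_face hC hF huF
  have hle : Submodule.span ℝ (Smin P u) ≤ Submodule.span ℝ F := Submodule.span_mono hsub
  have hdim : faceDim F ≤ faceDim (Smin P u) :=
    hFmin _ (Smin_isFace hC hu) (Smin_mem hC hu)
  have hspan : Submodule.span ℝ (Smin P u) = Submodule.span ℝ F :=
    Submodule.eq_of_le_of_finrank_le hle hdim
  rw [← hspan] at hw
  obtain ⟨a, ha, b, hb, rfl⟩ := span_le_diffSub hC hu hw
  obtain ⟨hbP, t, ht, hbt⟩ := hb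
  refine ⟨t, ht, fun s hs0 hst => ?_⟩
  have h1 : u - s • b ∈ P := down hC hu ht hbt hs0 hst
  have key : u + s • (a - b) = (u - s • b) + s • a := by rw [smul_sub]; abel
  rw [key]
  exact hC.add _ h1 _ (hC.smul _ hs0 _ ha.1)

lemma specSet_bddAbove {m n : ℕ} (A : Matrix (Fin m) (Fin n) ℝ) :
    BddAbove {r : ℝ | ∃ v : Fin n → ℝ, vnorm v ≤ 1 ∧ r = vnorm (A.mulVec v)} := by
  refine ⟨Real.sqrt (∑ i, (fun i => A i ⬝ᵥ A i) i), ?_⟩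
  rintro r ⟨v, hv, rfl⟩
  have hvv : v ⬝ᵥ v ≤ 1 := by
    have := vnorm_sq v
    nlinarith [vnorm_nonneg v]
  have hbound : (A.mulVec v) ⬝ᵥ (A.mulVec v) ≤ ∑ i, A i ⬝ᵥ A i := by
    have h1 : (A.mulVec v) ⬝ᵥ (A.mulVec v) = ∑ i, (A i ⬝ᵥ v) * (A i ⬝ᵥ v) := by
      simp [dotProduct, mulVec, Finset.mul_sum]
    rw [h1]
    apply Finset.sum_le_sum
    intro i _
    have := cauchy (A i) v
    nlinarith [dot_self_nonneg (A i)]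
  exact Real.sqrt_le_sqrt hbound

lemma vnorm_mem_specSet {m n : ℕ} (A : Matrix (Fin m) (Fin n) ℝ) {v : Fin n → ℝ}
    (hv : vnorm v = 1) : vnorm (A.mulVec v) ≤ specNorm A :=
  le_csSup (specSet_bddAbove A) ⟨v, hv.le, rfl⟩

lemma abs_dot_le_specNorm {m n : ℕ} (A : Matrix (Fin m) (Fin n) ℝ) {u : Fin m → ℝ}
    {v : Fin n → ℝ} (hu : vnorm u = 1) (hv : vnorm v = 1) :
    |u ⬝ᵥ A.mulVec v| ≤ specNorm A := by
  have hcs := cauchy u (A.mulVec v)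
  have h1 : (u ⬝ᵥ A.mulVec v)^2 ≤ (A.mulVec v) ⬝ᵥ (A.mulVec v) := by
    rw [dot_self_of_vnorm_one hu] at hcs; linarith
  have h2 : vnorm (A.mulVec v) ≤ specNorm A := vnorm_mem_specSet A hv
  have h3 : |u ⬝ᵥ A.mulVec v| ≤ vnorm (A.mulVec v) := by
    rw [← Real.sqrt_sq_eq_abs]
    exact Real.sqrt_le_sqrt (by rw [← vnorm_sq] at h1; nlinarith [vnorm_sq (A.mulVec v)])
  linarith

lemma specNorm_neg {m n : ℕ} (A : Matrix (Fin m) (Fin n) ℝ) : specNorm (-A) = specNorm A := by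
  unfold specNorm
  congr 1
  ext r
  constructor <;> rintro ⟨v, hv, rfl⟩ <;> refine ⟨v, hv, ?_⟩ <;>
    simp [vnorm, neg_mulVec, dotProduct_neg, neg_dotProduct]

lemma exists_z {m n : ℕ} (A : Matrix (Fin m) (Fin n) ℝ)
    (K V : Submodule ℝ (Fin n → ℝ)) (U : Submodule ℝ (Fin m → ℝ))
    (h : m + n < Module.finrank ℝ K + Module.finrank ℝ U + Module.finrank ℝ V) :
    ∃ z : Fin n → ℝ, z ≠ 0 ∧ z ∈ K ∧ z ∈ V ∧ A.mulVec z ∈ U := by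
  classical
  set C : Submodule ℝ (Fin n → ℝ) := Submodule.comap A.mulVecLin U with hCdef
  have hC : n + Module.finrank ℝ U ≤ Module.finrank ℝ C + m := by
    set g : (Fin n → ℝ) →ₗ[ℝ] ((Fin m → ℝ) ⧸ U) := U.mkQ.comp A.mulVecLin with hg
    have hker : LinearMap.ker g = C := by
      rw [hg, LinearMap.ker_comp, Submodule.ker_mkQ]
    have h1 : Module.finrank ℝ (LinearMap.range g) + Module.finrank ℝ (LinearMap.ker g)
        = Module.finrank ℝ (Fin n → ℝ) := LinearMap.finrank_range_add_finrank_ker g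
    have h2 : Module.finrank ℝ (LinearMap.range g) ≤ Module.finrank ℝ ((Fin m → ℝ) ⧸ U) :=
      Submodule.finrank_le _
    have h3 : Module.finrank ℝ ((Fin m → ℝ) ⧸ U) + Module.finrank ℝ U
        = Module.finrank ℝ (Fin m → ℝ) := Submodule.finrank_quotient_add_finrank U
    rw [Module.finrank_fin_fun] at h1 h3
    rw [hker] at h1
    omega
  have hKV : Module.finrank ℝ K + Module.finrank ℝ V
      ≤ Module.finrank ℝ ↥(K ⊓ V) + n := by
    have h1 := Submodule.finrank_sup_add_finrank_inf_eq K V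
    have h2 : Module.finrank ℝ ↥(K ⊔ V) ≤ n := by
      have := Submodule.finrank_le (K ⊔ V)
      rwa [Module.finrank_fin_fun] at this
    omega
  have hKVC : Module.finrank ℝ ↥(K ⊓ V) + Module.finrank ℝ C
      ≤ Module.finrank ℝ ↥(K ⊓ V ⊓ C) + n := by
    have h1 := Submodule.finrank_sup_add_finrank_inf_eq (K ⊓ V) C
    have h2 : Module.finrank ℝ ↥((K ⊓ V) ⊔ C) ≤ n := by
      have := Submodule.finrank_le ((K ⊓ V) ⊔ C)
      rwa [Module.finrank_fin_fun] at this
    omega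
  have hpos : 0 < Module.finrank ℝ ↥(K ⊓ V ⊓ C) := by omega
  have : Nontrivial ↥(K ⊓ V ⊓ C) := Module.finrank_pos_iff.mp hpos
  obtain ⟨z, hz⟩ := exists_ne (0 : ↥(K ⊓ V ⊓ C))
  have hzmem := z.2
  rw [Submodule.mem_inf, Submodule.mem_inf] at hzmem
  refine ⟨(z : Fin n → ℝ), by simpa using hz, hzmem.1.1, hzmem.1.2, ?_⟩
  have h2 : (z : Fin n → ℝ) ∈ Submodule.comap A.mulVecLin U := hzmem.2
  rw [Submodule.mem_comap] at h2
  simpa [Matrix.mulVecLin_apply] using h2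

set_option maxHeartbeats 1000000 in
lemma core {m n : ℕ} (A : Matrix (Fin m) (Fin n) ℝ)
    (P : Set (Fin m → ℝ)) (Q : Set (Fin n → ℝ))
    (hPs : ∀ c : ℝ, 0 ≤ c → ∀ x ∈ P, c • x ∈ P)
    (hQs : ∀ c : ℝ, 0 ≤ c → ∀ x ∈ Q, c • x ∈ Q)
    (u : Fin m → ℝ) (v : Fin n → ℝ) (w : Fin m → ℝ) (z : Fin n → ℝ)
    (hu1 : u ⬝ᵥ u = 1) (hv1 : v ⬝ᵥ v = 1) (hw1 : w ⬝ᵥ w = 1) (hz1 : z ⬝ᵥ z = 1)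
    (hal : w ⬝ᵥ A.mulVec v = (u ⬝ᵥ A.mulVec v) * (u ⬝ᵥ w))
    (hbe : u ⬝ᵥ A.mulVec z = (u ⬝ᵥ A.mulVec v) * (v ⬝ᵥ z))
    (hwz : w ⬝ᵥ A.mulVec z = specNorm A)
    (hs : |u ⬝ᵥ A.mulVec v| < specNorm A)
    (hfeas : ∀ᶠ t in nhdsWithin (0:ℝ) (Set.Ioi 0), u + t • w ∈ P ∧ v + t • z ∈ Q) :
    ¬ ∃ ε > (0:ℝ), ∀ u' ∈ P, ∀ v' ∈ Q, vnorm u' = 1 → vnorm v' = 1 →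
        vnorm (u' - u) < ε → vnorm (v' - v) < ε → u' ⬝ᵥ A.mulVec v' ≤ u ⬝ᵥ A.mulVec v := by
  rintro ⟨ε, hε, hloc⟩
  set σ : ℝ := u ⬝ᵥ A.mulVec v with hσdef
  set s : ℝ := specNorm A with hsdef
  set α : ℝ := u ⬝ᵥ w with hαdef
  set β : ℝ := v ⬝ᵥ z with hβdef
  have hspos : 0 < s := lt_of_le_of_lt (abs_nonneg σ) hs
  have hα1 : α ^ 2 ≤ 1 := by have := cauchy u w; rw [hu1, hw1] at this; simpa using this
  have hβ1 : β ^ 2 ≤ 1 := by have := cauchy v z; rw [hv1, hz1] at this; simpa using this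
  -- scalar functions
  set d1 : ℝ → ℝ := fun t => 1 + 2*α*t + t^2 with hd1def
  set d2 : ℝ → ℝ := fun t => 1 + 2*β*t + t^2 with hd2def
  set N : ℝ → ℝ := fun t => σ + σ*(α+β)*t + s*t^2 with hNdef
  -- dot product expansions
  have hdot1 : ∀ t : ℝ, (u + t • w) ⬝ᵥ (u + t • w) = d1 t := by
    intro t
    simp only [dotProduct_add, add_dotProduct, dotProduct_smul, smul_dotProduct,
      smul_eq_mul, hd1def, hu1, hw1]
    rw [dotProduct_comm w u]
    ring
  have hdot2 : ∀ t : ℝ, (v + t • z) ⬝ᵥ (v + t • z) = d2 t := by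
    intro t
    simp only [dotProduct_add, add_dotProduct, dotProduct_smul, smul_dotProduct,
      smul_eq_mul, hd2def, hv1, hz1]
    rw [dotProduct_comm z v]
    ring
  have hdotu : ∀ t : ℝ, u ⬝ᵥ (u + t • w) = 1 + α*t := by
    intro t
    simp only [dotProduct_add, dotProduct_smul, smul_eq_mul, hu1, hαdef]
    ring
  have hdotv : ∀ t : ℝ, v ⬝ᵥ (v + t • z) = 1 + β*t := by
    intro t
    simp only [dotProduct_add, dotProduct_smul, smul_eq_mul, hv1, hβdef]
    ring
  have hNval : ∀ t : ℝ, (u + t • w) ⬝ᵥ A.mulVec (v + t • z) = N t := by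
    intro t
    rw [mulVec_add, mulVec_smul]
    simp only [dotProduct_add, add_dotProduct, dotProduct_smul, smul_dotProduct,
      smul_eq_mul, hNdef]
    rw [hal, hbe, hwz]
    ring
  -- positivity of d1, d2 near 0
  have hcont1 : Continuous d1 := by fun_prop
  have hcont2 : Continuous d2 := by fun_prop
  have hd10 : d1 0 = 1 := by simp [hd1def]
  have hd20 : d2 0 = 1 := by simp [hd2def]
  have E1 : ∀ᶠ t in nhdsWithin (0:ℝ) (Set.Ioi 0), 0 < d1 t :=
    eventually_nhdsWithin_of_eventually_nhds
      ((hcont1.tendsto 0).eventually (by rw [hd10]; exact eventually_gt_nhds one_pos))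
  have E2 : ∀ᶠ t in nhdsWithin (0:ℝ) (Set.Ioi 0), 0 < d2 t :=
    eventually_nhdsWithin_of_eventually_nhds
      ((hcont2.tendsto 0).eventually (by rw [hd20]; exact eventually_gt_nhds one_pos))
  -- the main inequality
  have Emain : ∀ᶠ t in nhdsWithin (0:ℝ) (Set.Ioi 0),
      σ * (Real.sqrt (d1 t) * Real.sqrt (d2 t)) < N t := by
    set q : ℝ → ℝ := fun t => σ^2*(α-β)^2 + 2*σ*(s-σ) + t*(2*σ*(α+β)*(s-σ)) + t^2*(s^2-σ^2)
      with hqdef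
    have hqid : ∀ t : ℝ, (N t)^2 - σ^2*(d1 t * d2 t) = t^2 * q t := by
      intro t; simp only [hNdef, hd1def, hd2def, hqdef]; ring
    have hqcont : Continuous q := by fun_prop
    have habs : -s < σ ∧ σ < s := abs_lt.mp hs
    rcases lt_trichotomy σ 0 with hσ | hσ | hσ
    · -- σ < 0 : q 0 < 0
      have hq0 : q 0 < 0 := by
        simp only [hqdef]
        nlinarith [sq_nonneg σ, sq_nonneg (α-β), habs.1, habs.2, hα1, hβ1, sq_nonneg (α+β)]
      have Eq : ∀ᶠ t in nhdsWithin (0:ℝ) (Set.Ioi 0), q t < 0 :=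
        eventually_nhdsWithin_of_eventually_nhds
          ((hqcont.tendsto 0).eventually (eventually_lt_nhds hq0))
      filter_upwards [Eq, E1, E2, self_mem_nhdsWithin] with t hq hd1 hd2 ht
      have ht0 : (0:ℝ) < t := ht
      set D : ℝ := Real.sqrt (d1 t) * Real.sqrt (d2 t) with hDdef
      have hDpos : 0 < D := mul_pos (Real.sqrt_pos.mpr hd1) (Real.sqrt_pos.mpr hd2)
      have hD2 : D^2 = d1 t * d2 t := by
        rw [hDdef, mul_pow, Real.sq_sqrt hd1.le, Real.sq_sqrt hd2.le]
      have hlt : (N t)^2 < (σ*D)^2 := by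
        have h1 := hqid t
        have h2 : t^2 * q t < 0 := mul_neg_of_pos_of_neg (by positivity) hq
        have h3 : (σ*D)^2 = σ^2*(d1 t * d2 t) := by rw [mul_pow, hD2]
        linarith
      have hσD : σ * D < 0 := mul_neg_of_neg_of_pos hσ hDpos
      have habs1 : |N t| < |σ * D| := sq_lt_sq.mp hlt
      have habs2 : |σ * D| = -(σ * D) := abs_of_neg hσD
      linarith [neg_abs_le (N t)]
    · -- σ = 0
      filter_upwards [self_mem_nhdsWithin] with t ht
      have ht0 : (0:ℝ) < t := ht
      simp only [hNdef, hσ]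
      simp only [zero_mul, zero_add, mul_zero]
      positivity
    · -- σ > 0 : q 0 > 0
      have hq0 : 0 < q 0 := by
        simp only [hqdef]
        nlinarith [sq_nonneg (σ*(α-β)), habs.2]
      have Eq : ∀ᶠ t in nhdsWithin (0:ℝ) (Set.Ioi 0), 0 < q t :=
        eventually_nhdsWithin_of_eventually_nhds
          ((hqcont.tendsto 0).eventually (eventually_gt_nhds hq0))
      have hNcont : Continuous N := by fun_prop
      have hN0 : N 0 = σ := by simp [hNdef]
      have EN : ∀ᶠ t in nhdsWithin (0:ℝ) (Set.Ioi 0), 0 < N t :=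
        eventually_nhdsWithin_of_eventually_nhds
          ((hNcont.tendsto 0).eventually (by rw [hN0]; exact eventually_gt_nhds hσ))
      filter_upwards [Eq, EN, E1, E2, self_mem_nhdsWithin] with t hq hN hd1 hd2 ht
      have ht0 : (0:ℝ) < t := ht
      set D : ℝ := Real.sqrt (d1 t) * Real.sqrt (d2 t) with hDdef
      have hDpos : 0 < D := mul_pos (Real.sqrt_pos.mpr hd1) (Real.sqrt_pos.mpr hd2)
      have hD2 : D^2 = d1 t * d2 t := by
        rw [hDdef, mul_pow, Real.sq_sqrt hd1.le, Real.sq_sqrt hd2.le]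
      have hlt : (σ*D)^2 < (N t)^2 := by
        have h1 := hqid t
        have h2 : 0 < t^2 * q t := mul_pos (by positivity) hq
        have h3 : (σ*D)^2 = σ^2*(d1 t * d2 t) := by rw [mul_pow, hD2]
        linarith
      have habs1 : |σ * D| < |N t| := sq_lt_sq.mp hlt
      have habs2 : |N t| = N t := abs_of_pos hN
      linarith [le_abs_self (σ * D)]
  -- closeness
  have Eclose1 : ∀ᶠ t in nhdsWithin (0:ℝ) (Set.Ioi 0),
      ((Real.sqrt (d1 t))⁻¹ • (u + t • w) - u) ⬝ᵥ ((Real.sqrt (d1 t))⁻¹ • (u + t • w) - u)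
        < ε^2 := by
    set φ : ℝ → ℝ := fun t => 2 - 2 * (Real.sqrt (d1 t))⁻¹ * (1 + α*t) with hφdef
    have hc : ContinuousAt φ 0 := by
      have h1 : ContinuousAt (fun t => Real.sqrt (d1 t)) 0 :=
        (Real.continuous_sqrt.comp hcont1).continuousAt
      have h2 : Real.sqrt (d1 0) ≠ 0 := by rw [hd10, Real.sqrt_one]; norm_num
      exact (continuousAt_const.sub
        (((continuousAt_const.mul (h1.inv₀ h2)).mul (by fun_prop))))
    have hφ0 : φ 0 = 0 := by simp [hφdef, hd10]
    have hev : ∀ᶠ t in nhdsWithin (0:ℝ) (Set.Ioi 0), φ t < ε^2 :=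
      eventually_nhdsWithin_of_eventually_nhds
        (hc.eventually_lt continuousAt_const (by rw [hφ0]; positivity))
    filter_upwards [hev, E1] with t hφt hd1t
    have hexp : ((Real.sqrt (d1 t))⁻¹ • (u + t • w) - u) ⬝ᵥ
        ((Real.sqrt (d1 t))⁻¹ • (u + t • w) - u) = φ t := by
      set c : ℝ := (Real.sqrt (d1 t))⁻¹ with hcdef
      have hcsq : c^2 * d1 t = 1 := by
        rw [hcdef, ← Real.sq_sqrt hd1t.le]
        field_simp
        rw [Real.sqrt_sq (Real.sqrt_nonneg _)]
      simp only [sub_dotProduct, dotProduct_sub, smul_dotProduct, dotProduct_smul,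
        smul_eq_mul, hdot1, hdotu, hu1, hφdef]
      rw [dotProduct_comm (u + t • w) u, hdotu, ← hcdef]
      linear_combination hcsq
    rw [hexp]
    exact hφt
  have Eclose2 : ∀ᶠ t in nhdsWithin (0:ℝ) (Set.Ioi 0),
      ((Real.sqrt (d2 t))⁻¹ • (v + t • z) - v) ⬝ᵥ ((Real.sqrt (d2 t))⁻¹ • (v + t • z) - v)
        < ε^2 := by
    set φ : ℝ → ℝ := fun t => 2 - 2 * (Real.sqrt (d2 t))⁻¹ * (1 + β*t) with hφdef
    have hc : ContinuousAt φ 0 := by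
      have h1 : ContinuousAt (fun t => Real.sqrt (d2 t)) 0 :=
        (Real.continuous_sqrt.comp hcont2).continuousAt
      have h2 : Real.sqrt (d2 0) ≠ 0 := by rw [hd20, Real.sqrt_one]; norm_num
      exact (continuousAt_const.sub
        (((continuousAt_const.mul (h1.inv₀ h2)).mul (by fun_prop))))
    have hφ0 : φ 0 = 0 := by simp [hφdef, hd20]
    have hev : ∀ᶠ t in nhdsWithin (0:ℝ) (Set.Ioi 0), φ t < ε^2 :=
      eventually_nhdsWithin_of_eventually_nhds
        (hc.eventually_lt continuousAt_const (by rw [hφ0]; positivity))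
    filter_upwards [hev, E2] with t hφt hd2t
    have hexp : ((Real.sqrt (d2 t))⁻¹ • (v + t • z) - v) ⬝ᵥ
        ((Real.sqrt (d2 t))⁻¹ • (v + t • z) - v) = φ t := by
      set c : ℝ := (Real.sqrt (d2 t))⁻¹ with hcdef
      have hcsq : c^2 * d2 t = 1 := by
        rw [hcdef, ← Real.sq_sqrt hd2t.le]
        field_simp
        rw [Real.sqrt_sq (Real.sqrt_nonneg _)]
      simp only [sub_dotProduct, dotProduct_sub, smul_dotProduct, dotProduct_smul,
        smul_eq_mul, hdot2, hdotv, hv1, hφdef]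
      rw [dotProduct_comm (v + t • z) v, hdotv, ← hcdef]
      linear_combination hcsq
    rw [hexp]
    exact hφt
  -- pick a good t
  obtain ⟨t, ⟨hfeP, hfeQ⟩, hmain, hd1t, hd2t, hcl1, hcl2⟩ :=
    (hfeas.and (Emain.and (E1.and (E2.and (Eclose1.and Eclose2))))).exists
  have hs1 : 0 < Real.sqrt (d1 t) := Real.sqrt_pos.mpr hd1t
  have hs2 : 0 < Real.sqrt (d2 t) := Real.sqrt_pos.mpr hd2t
  have hu'P : (Real.sqrt (d1 t))⁻¹ • (u + t • w) ∈ P := hPs _ (by positivity) _ hfeP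
  have hv'Q : (Real.sqrt (d2 t))⁻¹ • (v + t • z) ∈ Q := hQs _ (by positivity) _ hfeQ
  have hnu' : vnorm ((Real.sqrt (d1 t))⁻¹ • (u + t • w)) = 1 := by
    rw [vnorm_smul (by positivity), vnorm_eq_sqrt (hdot1 t),
      inv_mul_cancel₀ (ne_of_gt hs1)]
  have hnv' : vnorm ((Real.sqrt (d2 t))⁻¹ • (v + t • z)) = 1 := by
    rw [vnorm_smul (by positivity), vnorm_eq_sqrt (hdot2 t),
      inv_mul_cancel₀ (ne_of_gt hs2)]
  have hclose1 : vnorm ((Real.sqrt (d1 t))⁻¹ • (u + t • w) - u) < ε :=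
    (Real.sqrt_lt' hε).mpr hcl1
  have hclose2 : vnorm ((Real.sqrt (d2 t))⁻¹ • (v + t • z) - v) < ε :=
    (Real.sqrt_lt' hε).mpr hcl2
  have hval := hloc _ hu'P _ hv'Q hnu' hnv' hclose1 hclose2
  have hveq : ((Real.sqrt (d1 t))⁻¹ • (u + t • w)) ⬝ᵥ
      A.mulVec ((Real.sqrt (d2 t))⁻¹ • (v + t • z))
      = (Real.sqrt (d1 t))⁻¹ * ((Real.sqrt (d2 t))⁻¹ * N t) := by
    rw [mulVec_smul, smul_dotProduct, dotProduct_smul, hNval t]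
    simp [smul_eq_mul]
  rw [hveq] at hval
  have h1 : (Real.sqrt (d1 t))⁻¹ * ((Real.sqrt (d2 t))⁻¹ * N t)
        * (Real.sqrt (d1 t) * Real.sqrt (d2 t))
      ≤ σ * (Real.sqrt (d1 t) * Real.sqrt (d2 t)) :=
    mul_le_mul_of_nonneg_right hval (by positivity)
  have h2 : (Real.sqrt (d1 t))⁻¹ * ((Real.sqrt (d2 t))⁻¹ * N t)
      * (Real.sqrt (d1 t) * Real.sqrt (d2 t)) = N t := by
    field_simp
  rw [h2] at h1
  exact absurd hmain (not_lt.mpr h1)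


lemma isCone_coneOf {d : ℕ} (P : Set (Fin d → ℝ))
    (hP : ∃ (p : ℕ) (G : Matrix (Fin d) (Fin p) ℝ), P = coneOf G) : IsCone P := by
  obtain ⟨p, G, rfl⟩ := hP
  refine ⟨?_, ?_, ?_⟩
  · rintro x ⟨a, ha, rfl⟩ y ⟨b, hb, rfl⟩
    exact ⟨a + b, fun i => add_nonneg (ha i) (hb i), by rw [mulVec_add]⟩
  · rintro c hc x ⟨a, ha, rfl⟩
    exact ⟨c • a, fun i => mul_nonneg hc (ha i), by rw [mulVec_smul]⟩
  · exact ⟨0, fun i => le_refl 0, by rw [mulVec_zero]⟩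

lemma dot_mulVec_eq {m n : ℕ} (A : Matrix (Fin m) (Fin n) ℝ) (x : Fin m → ℝ)
    (y : Fin n → ℝ) : x ⬝ᵥ A.mulVec y = Aᵀ.mulVec x ⬝ᵥ y := by
  simp only [dotProduct, mulVec, transpose_apply, Finset.mul_sum, Finset.sum_mul]
  rw [Finset.sum_comm]
  congr 1; ext j; congr 1; ext i; ring

lemma perturb_ev {d : ℕ} {P : Set (Fin d → ℝ)} {u : Fin d → ℝ}
    (hC : IsCone P) (hu : u ∈ P) {F : Set (Fin d → ℝ)}
    (hF : IsFace P F) (huF : u ∈ F)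
    (hFmin : ∀ F', IsFace P F' → u ∈ F' → faceDim F ≤ faceDim F')
    {w : Fin d → ℝ} (hw : w ∈ Submodule.span ℝ F) :
    ∀ᶠ t in nhdsWithin (0:ℝ) (Set.Ioi 0), u + t • w ∈ P := by
  obtain ⟨t₀, ht₀, h⟩ := perturb hC hu hF huF hFmin hw
  filter_upwards [Ioc_mem_nhdsGT ht₀] with t ht
  exact h t ht.1.le ht.2

lemma ortho {d : ℕ} {P : Set (Fin d → ℝ)} {u : Fin d → ℝ}
    (hC : IsCone P) (hu : u ∈ P) {F : Set (Fin d → ℝ)}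
    (hF : IsFace P F) (huF : u ∈ F)
    (hFmin : ∀ F', IsFace P F' → u ∈ F' → faceDim F ≤ faceDim F')
    {g : Fin d → ℝ} (hg1 : ∀ p ∈ P, 0 ≤ g ⬝ᵥ p) (hg2 : g ⬝ᵥ u = 0) :
    ∀ x ∈ Submodule.span ℝ F, g ⬝ᵥ x = 0 := by
  have key : ∀ x ∈ Submodule.span ℝ F, 0 ≤ g ⬝ᵥ x := by
    intro x hx
    obtain ⟨t₀, ht₀, h⟩ := perturb hC hu hF huF hFmin hx
    have h1 := hg1 _ (h t₀ ht₀.le le_rfl)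
    rw [dotProduct_add, hg2, dotProduct_smul, smul_eq_mul, zero_add] at h1
    exact nonneg_of_mul_nonneg_right h1 ht₀
  intro x hx
  have h1 := key x hx
  have h2 := key (-x) (neg_mem hx)
  rw [dotProduct_neg] at h2
  linarith

end SV8

open SV8 Filter in
set_option maxHeartbeats 1000000 in
/-- If `(u,v)` is a critical pair of `SV(A,P,Q)` for polyhedral cones, the
least-dimensional faces `F_u ∋ u`, `F_v ∋ v` satisfy `dim F_u + dim F_v > m + n − r`
(`r` the multiplicity of `‖A‖` as a singular value of `A`), and `⟨u,Av⟩ ≠ ±‖A‖`, then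
`(u,v)` is a saddle point of `SV(A,P,Q)`. -/
theorem stmt8 {m n : ℕ} (A : Matrix (Fin m) (Fin n) ℝ) (hA : A ≠ 0)
    (P : Set (Fin m → ℝ)) (Q : Set (Fin n → ℝ))
    (hP : ∃ (p : ℕ) (G : Matrix (Fin m) (Fin p) ℝ), P = coneOf G)
    (hQ : ∃ (q : ℕ) (H : Matrix (Fin n) (Fin q) ℝ), Q = coneOf H)
    (u : Fin m → ℝ) (v : Fin n → ℝ)
    (hu : u ∈ P) (hv : v ∈ Q) (hnu : vnorm u = 1) (hnv : vnorm v = 1)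
    (hcrit1 : ∀ w ∈ P, 0 ≤ (A.mulVec v - (u ⬝ᵥ A.mulVec v) • u) ⬝ᵥ w)
    (hcrit2 : ∀ w ∈ Q, 0 ≤ (Aᵀ.mulVec u - (u ⬝ᵥ A.mulVec v) • v) ⬝ᵥ w)
    (hcrit3 : u ⬝ᵥ (A.mulVec v - (u ⬝ᵥ A.mulVec v) • u) = 0)
    (hcrit4 : v ⬝ᵥ (Aᵀ.mulVec u - (u ⬝ᵥ A.mulVec v) • v) = 0)
    (Fu : Set (Fin m → ℝ)) (Fv : Set (Fin n → ℝ))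
    (hFu : IsFace P Fu) (huFu : u ∈ Fu)
    (hFumin : ∀ F, IsFace P F → u ∈ F → faceDim Fu ≤ faceDim F)
    (hFv : IsFace Q Fv) (hvFv : v ∈ Fv)
    (hFvmin : ∀ F, IsFace Q F → v ∈ F → faceDim Fv ≤ faceDim F)
    (r : ℕ)
    (hr : r = Module.finrank ℝ
      ↥(LinearMap.ker (Aᵀ * A - specNorm A ^ 2 • (1 : Matrix (Fin n) (Fin n) ℝ)).mulVecLin))
    (hdim : m + n - r < faceDim Fu + faceDim Fv)
    (hne1 : u ⬝ᵥ A.mulVec v ≠ specNorm A) (hne2 : u ⬝ᵥ A.mulVec v ≠ -specNorm A) :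
    (¬ ∃ ε > (0:ℝ), ∀ u' ∈ P, ∀ v' ∈ Q, vnorm u' = 1 → vnorm v' = 1 →
        vnorm (u' - u) < ε → vnorm (v' - v) < ε → u ⬝ᵥ A.mulVec v ≤ u' ⬝ᵥ A.mulVec v') ∧
    (¬ ∃ ε > (0:ℝ), ∀ u' ∈ P, ∀ v' ∈ Q, vnorm u' = 1 → vnorm v' = 1 →
        vnorm (u' - u) < ε → vnorm (v' - v) < ε → u' ⬝ᵥ A.mulVec v' ≤ u ⬝ᵥ A.mulVec v) := by
  classical
  have hCP : IsCone P := isCone_coneOf P hP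
  have hCQ : IsCone Q := isCone_coneOf Q hQ
  set σ : ℝ := u ⬝ᵥ A.mulVec v with hσdef
  set s : ℝ := specNorm A with hsdef
  have hu1 : u ⬝ᵥ u = 1 := dot_self_of_vnorm_one hnu
  have hv1 : v ⬝ᵥ v = 1 := dot_self_of_vnorm_one hnv
  have hσs : |σ| < s := by
    have habs : |σ| ≤ s := abs_dot_le_specNorm A hnu hnv
    rcases lt_or_eq_of_le habs with h | h
    · exact h
    · have hs0 : 0 ≤ s := le_trans (abs_nonneg σ) habs
      rcases (abs_eq hs0).mp h with h' | h'
      · exact absurd h' hne1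
      · exact absurd h' hne2
  have hspos : 0 < s := lt_of_le_of_lt (abs_nonneg σ) hσs
  -- orthogonality on the spans of the minimal faces
  have orthoU : ∀ x ∈ Submodule.span ℝ Fu, (A.mulVec v - σ • u) ⬝ᵥ x = 0 :=
    ortho hCP hu hFu huFu hFumin hcrit1 (by rw [dotProduct_comm]; exact hcrit3)
  have orthoV : ∀ x ∈ Submodule.span ℝ Fv, (Aᵀ.mulVec u - σ • v) ⬝ᵥ x = 0 :=
    ortho hCQ hv hFv hvFv hFvmin hcrit2 (by rw [dotProduct_comm]; exact hcrit4)
  -- find the singular direction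
  set K : Submodule ℝ (Fin n → ℝ) :=
    LinearMap.ker (Aᵀ * A - s ^ 2 • (1 : Matrix (Fin n) (Fin n) ℝ)).mulVecLin with hKdef
  have hrn : r ≤ n := by
    rw [hr]
    have := Submodule.finrank_le K
    rwa [Module.finrank_fin_fun] at this
  have hcount : m + n < Module.finrank ℝ K
      + Module.finrank ℝ ↥(Submodule.span ℝ Fu) + Module.finrank ℝ ↥(Submodule.span ℝ Fv) := by
    have h1 : faceDim Fu = Module.finrank ℝ ↥(Submodule.span ℝ Fu) := rfl
    have h2 : faceDim Fv = Module.finrank ℝ ↥(Submodule.span ℝ Fv) := rfl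
    rw [← hr, ← h1, ← h2]
    omega
  obtain ⟨z0, hz0ne, hz0K, hz0V, hz0U⟩ :=
    exists_z A K (Submodule.span ℝ Fv) (Submodule.span ℝ Fu) hcount
  -- kernel equation
  have hAAz0 : Aᵀ.mulVec (A.mulVec z0) = s ^ 2 • z0 := by
    rw [hKdef, LinearMap.mem_ker, mulVecLin_apply, sub_mulVec, smul_mulVec,
      one_mulVec, sub_eq_zero, ← mulVec_mulVec] at hz0K
    exact hz0K
  have hz0pos : 0 < vnorm z0 := by
    rcases lt_or_eq_of_le (vnorm_nonneg z0) with h | h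
    · exact h
    · exfalso
      apply hz0ne
      apply dot_eq_zero_self
      have := (Real.sqrt_eq_zero (dot_self_nonneg z0)).mp h.symm
      exact this
  -- normalize
  set z : Fin n → ℝ := (vnorm z0)⁻¹ • z0 with hzdef
  have hz1 : z ⬝ᵥ z = 1 := by
    rw [hzdef]
    simp only [smul_dotProduct, dotProduct_smul, smul_eq_mul]
    rw [← vnorm_sq z0]
    field_simp
  have hzV : z ∈ Submodule.span ℝ Fv := Submodule.smul_mem _ _ hz0V
  have hAz : Aᵀ.mulVec (A.mulVec z) = s ^ 2 • z := by
    rw [hzdef, mulVec_smul, mulVec_smul, hAAz0, smul_comm]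
  have hAzdot : A.mulVec z ⬝ᵥ A.mulVec z = s ^ 2 := by
    rw [dot_mulVec_eq, hAz, smul_dotProduct, smul_eq_mul, hz1, mul_one]
  set w : Fin m → ℝ := s⁻¹ • A.mulVec z with hwdef
  have hwU : w ∈ Submodule.span ℝ Fu := by
    rw [hwdef, hzdef, mulVec_smul]
    exact Submodule.smul_mem _ _ (Submodule.smul_mem _ _ hz0U)
  have hw1 : w ⬝ᵥ w = 1 := by
    rw [hwdef]
    simp only [smul_dotProduct, dotProduct_smul, smul_eq_mul]
    rw [hAzdot]
    field_simp
  have hwz : w ⬝ᵥ A.mulVec z = s := by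
    rw [hwdef, smul_dotProduct, smul_eq_mul, hAzdot]
    field_simp
  -- first order conditions
  have hal : w ⬝ᵥ A.mulVec v = σ * (u ⬝ᵥ w) := by
    have h := orthoU w hwU
    rw [sub_dotProduct, smul_dotProduct, smul_eq_mul, sub_eq_zero] at h
    rw [dotProduct_comm w (A.mulVec v), h, dotProduct_comm u w]
  have hbe : u ⬝ᵥ A.mulVec z = σ * (v ⬝ᵥ z) := by
    have h := orthoV z hzV
    rw [sub_dotProduct, smul_dotProduct, smul_eq_mul, sub_eq_zero] at h
    rw [dot_mulVec_eq, h, dotProduct_comm v z]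
  -- feasibility
  have hfeasP : ∀ᶠ t in nhdsWithin (0:ℝ) (Set.Ioi 0), u + t • w ∈ P :=
    perturb_ev hCP hu hFu huFu hFumin hwU
  have hfeasQ : ∀ᶠ t in nhdsWithin (0:ℝ) (Set.Ioi 0), v + t • z ∈ Q :=
    perturb_ev hCQ hv hFv hvFv hFvmin hzV
  have hfeasQ' : ∀ᶠ t in nhdsWithin (0:ℝ) (Set.Ioi 0), v + t • (-z) ∈ Q :=
    perturb_ev hCQ hv hFv hvFv hFvmin (neg_mem hzV)
  constructor
  · -- not a local minimizer : use core with -A and -z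
    rintro ⟨ε, hε, h⟩
    refine core (-A) P Q hCP.smul hCQ.smul u v w (-z) hu1 hv1 hw1
      (by rw [neg_dotProduct, dotProduct_neg, neg_neg]; exact hz1)
      ?_ ?_ ?_ ?_ (hfeasP.and hfeasQ') ⟨ε, hε, ?_⟩
    · simp only [neg_mulVec, dotProduct_neg]
      rw [hal]; ring
    · simp only [neg_mulVec, mulVec_neg, neg_neg, dotProduct_neg, mul_neg, neg_mul, neg_neg]
      rw [hbe]
    · simp only [neg_mulVec, mulVec_neg, neg_neg, specNorm_neg]
      exact hwz
    · simp only [neg_mulVec, dotProduct_neg, abs_neg, specNorm_neg]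
      exact hσs
    · intro u' hu' v' hv' h1 h2 h3 h4
      have h5 := h u' hu' v' hv' h1 h2 h3 h4
      simp only [neg_mulVec, dotProduct_neg]
      linarith
  · -- not a local maximizer
    exact core A P Q hCP.smul hCQ.smul u v w z hu1 hv1 hw1 hz1 hal hbe hwz hσs
      (hfeasP.and hfeasQ)
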